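/- For all integers k and i with 0 ≤ k, 2(2k+1)·d(m,k) + (k+1)·d(m,k+1) = Σ_i iterm(m,k,i), where iterm(m,k,i) = 2(2k+1)·term(m,k,i,k) and term(m,k,i,j) = [m≥0]·3·(-1)^{k+j}·C(2k,k)·C(j,i)·C(m,i)·C(i,m-j)/(2(2i-1)(2j+1)(2m-2i-1)). -/

import Mathlib

/-- Binomial coefficient polynomial `x(x-1)...(x-j+1)/j!` at integer `x`; zero for `j < 0`. -/
def binC (x j : ℤ) : ℚ :=
  if j < 0 then 0 else (∏ t ∈ Finset.range j.toNat, ((x : ℚ) - t)) / (j.toNat).factorial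

/-- The coefficients `d(m,k)`; zero for `m < 0`. -/
noncomputable def dd (m k : ℤ) : ℚ :=
  if m < 0 then 0 else
  ∑ i ∈ Finset.Icc 0 m, ∑ j ∈ Finset.Icc k m,
    3 * (-1 : ℚ) ^ (k + j) * binC (2 * k) k * binC j i * binC m i * binC i (m - j) /
      (2 * (2 * i - 1) * (2 * j + 1) * (2 * m - 2 * i - 1))

def term (m k i j : ℤ) : ℚ :=
  (if 0 ≤ m then 1 else 0) *
    (3 * (-1 : ℚ) ^ (k + j) * binC (2 * k) k * binC j i * binC m i * binC i (m - j) /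
      (2 * (2 * i - 1) * (2 * j + 1) * (2 * m - 2 * i - 1)))

def iterm (m k i : ℤ) : ℚ := 2 * (2 * k + 1) * term m k i k

lemma binC_neg' (x j : ℤ) (h : j < 0) : binC x j = 0 := if_pos h

lemma binC_nat' (n j : ℕ) : binC n j = (n.choose j : ℚ) := by
  unfold binC
  rw [if_neg (by omega), Int.toNat_natCast]
  push_cast
  rcases le_or_gt j n with h | h
  · have hp : ∏ t ∈ Finset.range j, ((n:ℚ) - t) = (n.descFactorial j : ℚ) := by
      rw [Nat.descFactorial_eq_prod_range, Nat.cast_prod]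
      refine Finset.prod_congr rfl fun t ht => ?_
      have : t ≤ n := le_trans (Nat.le_of_lt_succ (Nat.lt_succ_of_lt (Finset.mem_range.mp ht))) h
      push_cast [Nat.cast_sub this]
      ring
    rw [hp, Nat.descFactorial_eq_factorial_mul_choose]
    push_cast
    rw [mul_comm, mul_div_assoc, div_self (by exact_mod_cast j.factorial_ne_zero), mul_one]
  · have hp : ∏ t ∈ Finset.range j, ((n:ℚ) - t) = 0 :=
      Finset.prod_eq_zero (Finset.mem_range.mpr h) (by simp)
    rw [hp, Nat.choose_eq_zero_of_lt h]; simp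

lemma binC_key' (k : ℤ) (hk : 0 ≤ k) :
    ((k:ℚ) + 1) * binC (2 * (k + 1)) (k + 1) = 2 * (2 * (k:ℚ) + 1) * binC (2 * k) k := by
  obtain ⟨n, rfl⟩ := Int.eq_ofNat_of_zero_le hk
  have h1 : (2 * ((n:ℤ) + 1)) = ((2 * (n + 1) : ℕ) : ℤ) := by push_cast; ring
  have h2 : ((n:ℤ) + 1) = ((n + 1 : ℕ) : ℤ) := by push_cast; ring
  have h3 : (2 * (n:ℤ)) = ((2 * n : ℕ) : ℤ) := by push_cast; ring
  rw [h1, h2, h3, binC_nat', binC_nat']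
  have := Nat.succ_mul_centralBinom_succ n
  simp only [Nat.centralBinom] at this
  exact_mod_cast congrArg (Nat.cast : ℕ → ℚ) this

theorem d_single_sum (m k : ℤ) (hk : 0 ≤ k) :
    2 * (2 * k + 1) * dd m k + (k + 1) * dd m (k + 1) =
      ∑ i ∈ Finset.Icc 0 m, iterm m k i := by
  rcases lt_or_ge m 0 with hm | hm
  · rw [Finset.Icc_eq_empty (by omega : ¬ (0:ℤ) ≤ m)]
    simp [dd, if_pos hm]
  · unfold dd
    rw [if_neg (by omega), if_neg (by omega), Finset.mul_sum, Finset.mul_sum,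
      ← Finset.sum_add_distrib]
    refine Finset.sum_congr rfl fun i _ => ?_
    unfold iterm term
    rw [if_pos hm]
    set g : ℤ → ℤ → ℚ := fun K j =>
      3 * (-1 : ℚ) ^ (K + j) * binC (2 * K) K * binC j i * binC m i * binC i (m - j) /
        (2 * (2 * i - 1) * (2 * j + 1) * (2 * m - 2 * i - 1)) with hg
    show 2 * (2 * (k:ℚ) + 1) * ∑ j ∈ Finset.Icc k m, g k j +
        ((k:ℚ) + 1) * ∑ j ∈ Finset.Icc (k + 1) m, g (k + 1) j =
      2 * (2 * (k:ℚ) + 1) * (1 * g k k)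
    have hptw : ∀ j : ℤ, ((k:ℚ) + 1) * g (k + 1) j = -(2 * (2 * (k:ℚ) + 1) * g k j) := by
      intro j
      have hs : (-1 : ℚ) ^ (k + 1 + j) = -(-1 : ℚ) ^ (k + j) := by
        rw [show k + 1 + j = (k + j) + 1 by ring, zpow_add₀ (by norm_num : (-1:ℚ) ≠ 0),
          zpow_one]
        ring
      have hkey := binC_key' k hk
      simp only [hg, hs, div_eq_mul_inv]
      linear_combination (-3 * (-1:ℚ) ^ (k + j) * binC j i * binC m i * binC i (m - j) *
        (2 * (2 * (i:ℚ) - 1) * (2 * (j:ℚ) + 1) * (2 * (m:ℚ) - 2 * (i:ℚ) - 1))⁻¹) * hkey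
    have hsum : ((k:ℚ) + 1) * ∑ j ∈ Finset.Icc (k + 1) m, g (k + 1) j =
        -(2 * (2 * (k:ℚ) + 1) * ∑ j ∈ Finset.Icc (k + 1) m, g k j) := by
      rw [Finset.mul_sum, Finset.mul_sum]
      rw [← Finset.sum_neg_distrib]
      exact Finset.sum_congr rfl fun j _ => hptw j
    rw [hsum]
    rcases le_or_gt k m with h | h
    · have hins : Finset.Icc k m = insert k (Finset.Icc (k + 1) m) := by
        ext x; simp only [Finset.mem_Icc, Finset.mem_insert]; omega
      rw [hins, Finset.sum_insert (by simp)]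
      ring
    · rw [Finset.Icc_eq_empty (by omega : ¬ k ≤ m),
          Finset.Icc_eq_empty (by omega : ¬ k + 1 ≤ m)]
      have hz : binC i (m - k) = 0 := binC_neg' _ _ (by omega)
      simp [hg, hz]
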